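/- Let Ω = {ω_1, …, ω_12} and let 𝓘 = { {ω_1, ω_2, ω_3, ω_4}, {ω_4, ω_5, ω_6, ω_7}, {ω_7, ω_8, ω_9, ω_10}, {ω_10, ω_11, ω_12, ω_1}, {ω_2, ω_5, ω_8, ω_11} }. If P is a partition of Ω into exactly 4 nonempty blocks satisfying the 𝒥-minimal compatibility condition with respect to 𝓘, and no member of 𝓘 is contained in a single block of P, then P is one of the two partitions: {{ω_2, ω_6, ω_10}, {ω_5, ω_1, ω_9}, {ω_8, ω_4, ω_12}, {ω_11, ω_3, ω_7}} or {{ω_2, ω_7, ω_12}, {ω_5, ω_3, ω_10}, {ω_8, ω_1, ω_6}, {ω_11, ω_4, ω_9}}. -/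
import Mathlib


/-- `P` is a partition of `Ω` into exactly `r` nonempty pairwise disjoint blocks
whose union is `Ω`. -/
def isPartitionInto {Ω : Type*} [Fintype Ω] [DecidableEq Ω]
    (P : Finset (Finset Ω)) (r : ℕ) : Prop :=
  P.card = r ∧ (∀ B ∈ P, B.Nonempty) ∧
    (∀ B ∈ P, ∀ C ∈ P, B ≠ C → Disjoint B C) ∧ P.biUnion id = Finset.univ

/-- The 𝒥-minimal compatibility condition: every member `S` of `I` is either contained
in a single block of `P`, or its elements lie in pairwise distinct blocks of `P`. -/
def JCompat {Ω : Type*} [DecidableEq Ω] (P : Finset (Finset Ω))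
    (I : Finset (Finset Ω)) : Prop :=
  ∀ S ∈ I, (∃ B ∈ P, S ⊆ B) ∨
    (∀ x ∈ S, ∀ y ∈ S, ∀ B ∈ P, x ∈ B → y ∈ B → x = y)

/-- The collection 𝓘 of `4`-element subsets of `Fin 12`, where `ω_i` corresponds to
`i - 1 : Fin 12`. -/
def I12 : Finset (Finset (Fin 12)) :=
  {{0,1,2,3},{3,4,5,6},{6,7,8,9},{9,10,11,0},{1,4,7,10}}

lemma L1 : ∀ a4 a5 a6 : Fin 4, a4 ≠ a5 → a4 ≠ a6 → a5 ≠ a6 → a4 ≠ 3 → a5 ≠ 3 → a6 ≠ 3 → a4 ≠ 1 →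
  (a4=0∧a5=1∧a6=2) ∨ (a4=0∧a5=2∧a6=1) ∨ (a4=2∧a5=0∧a6=1) ∨ (a4=2∧a5=1∧a6=0) := by decide

set_option synthInstance.maxSize 2000 in
set_option maxHeartbeats 4000000 in
lemma L2a : ∀ a7 a8 a9 a10 a11 : Fin 4,
  (2:Fin 4) ≠ a7 → (2:Fin 4) ≠ a8 → (2:Fin 4) ≠ a9 → a7 ≠ a8 → a7 ≠ a9 → a8 ≠ a9 →
  a9 ≠ a10 → a9 ≠ a11 → a10 ≠ a11 → a9 ≠ 0 → a10 ≠ 0 → a11 ≠ 0 →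
  (0:Fin 4) ≠ a7 → (0:Fin 4) ≠ a10 → a7 ≠ a10 → a7 ≠ 1 → a10 ≠ 1 →
  a7=3∧a8=0∧a9=1∧a10=2∧a11=3 := by decide

set_option synthInstance.maxSize 2000 in
set_option maxHeartbeats 4000000 in
lemma L2b : ∀ a7 a8 a9 a10 a11 : Fin 4,
  (1:Fin 4) ≠ a7 → (1:Fin 4) ≠ a8 → (1:Fin 4) ≠ a9 → a7 ≠ a8 → a7 ≠ a9 → a8 ≠ a9 →
  a9 ≠ a10 → a9 ≠ a11 → a10 ≠ a11 → a9 ≠ 0 → a10 ≠ 0 → a11 ≠ 0 →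
  (0:Fin 4) ≠ a7 → (0:Fin 4) ≠ a10 → a7 ≠ a10 → a7 ≠ 1 → a10 ≠ 1 → False := by decide

set_option synthInstance.maxSize 2000 in
set_option maxHeartbeats 4000000 in
lemma L2c : ∀ a7 a8 a9 a10 a11 : Fin 4,
  (1:Fin 4) ≠ a7 → (1:Fin 4) ≠ a8 → (1:Fin 4) ≠ a9 → a7 ≠ a8 → a7 ≠ a9 → a8 ≠ a9 →
  a9 ≠ a10 → a9 ≠ a11 → a10 ≠ a11 → a9 ≠ 0 → a10 ≠ 0 → a11 ≠ 0 →
  (2:Fin 4) ≠ a7 → (2:Fin 4) ≠ a10 → a7 ≠ a10 → a7 ≠ 1 → a10 ≠ 1 →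
  a7=0∧a8=3∧a9=2∧a10=3∧a11=1 := by decide

set_option synthInstance.maxSize 2000 in
set_option maxHeartbeats 4000000 in
lemma L2d : ∀ a7 a8 a9 a10 a11 : Fin 4,
  (0:Fin 4) ≠ a7 → (0:Fin 4) ≠ a8 → (0:Fin 4) ≠ a9 → a7 ≠ a8 → a7 ≠ a9 → a8 ≠ a9 →
  a9 ≠ a10 → a9 ≠ a11 → a10 ≠ a11 → a9 ≠ 0 → a10 ≠ 0 → a11 ≠ 0 →
  (2:Fin 4) ≠ a7 → (2:Fin 4) ≠ a10 → a7 ≠ a10 → a7 ≠ 1 → a10 ≠ 1 → False := by decide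

lemma key : ∀ a4 a5 a6 a7 a8 a9 a10 a11 : Fin 4,
    a4 ≠ a5 → a4 ≠ a6 → a5 ≠ a6 → a4 ≠ 3 → a5 ≠ 3 → a6 ≠ 3 →
    a6 ≠ a7 → a6 ≠ a8 → a6 ≠ a9 → a7 ≠ a8 → a7 ≠ a9 → a8 ≠ a9 →
    a9 ≠ a10 → a9 ≠ a11 → a10 ≠ a11 → a9 ≠ 0 → a10 ≠ 0 → a11 ≠ 0 →
    a4 ≠ a7 → a4 ≠ a10 → a7 ≠ a10 → a4 ≠ 1 → a7 ≠ 1 → a10 ≠ 1 →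
    (a4=0∧a5=1∧a6=2∧a7=3∧a8=0∧a9=1∧a10=2∧a11=3) ∨
    (a4=2∧a5=0∧a6=1∧a7=0∧a8=3∧a9=2∧a10=3∧a11=1) := by
  intro a4 a5 a6 a7 a8 a9 a10 a11 h1 h2 h3 h4 h5 h6 h7 h8 h9 h10 h11 h12 h13 h14 h15 h16 h17 h18 h19 h20 h21 h22 h23 h24
  rcases L1 a4 a5 a6 h1 h2 h3 h4 h5 h6 h22 with ⟨e4,e5,e6⟩|⟨e4,e5,e6⟩|⟨e4,e5,e6⟩|⟨e4,e5,e6⟩ <;> subst e4 <;> subst e5 <;> subst e6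
  · obtain ⟨f7,f8,f9,f10,f11⟩ := L2a a7 a8 a9 a10 a11 h7 h8 h9 h10 h11 h12 h13 h14 h15 h16 h17 h18 h19 h20 h21 h23 h24
    exact Or.inl ⟨rfl, rfl, rfl, f7, f8, f9, f10, f11⟩
  · exact (L2b a7 a8 a9 a10 a11 h7 h8 h9 h10 h11 h12 h13 h14 h15 h16 h17 h18 h19 h20 h21 h23 h24).elim
  · obtain ⟨f7,f8,f9,f10,f11⟩ := L2c a7 a8 a9 a10 a11 h7 h8 h9 h10 h11 h12 h13 h14 h15 h16 h17 h18 h19 h20 h21 h23 h24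
    exact Or.inr ⟨rfl, rfl, rfl, f7, f8, f9, f10, f11⟩
  · exact (L2d a7 a8 a9 a10 a11 h7 h8 h9 h10 h11 h12 h13 h14 h15 h16 h17 h18 h19 h20 h21 h23 h24).elim

theorem stmt9 (P : Finset (Finset (Fin 12)))
    (hP : isPartitionInto P 4) (hcompat : JCompat P I12)
    (hblock : ∀ S ∈ I12, ∀ B ∈ P, ¬ S ⊆ B) :
    P = {{1,5,9},{4,0,8},{7,3,11},{10,2,6}} ∨
    P = {{1,6,11},{4,2,9},{7,0,5},{10,3,8}} := by
  obtain ⟨hcard, hne, hdis, hun⟩ := hP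
  have hrain : ∀ S ∈ I12, ∀ x ∈ S, ∀ y ∈ S, ∀ B ∈ P, x ∈ B → y ∈ B → x = y := by
    intro S hS
    rcases hcompat S hS with ⟨B, hB, hsub⟩ | h
    · exact absurd hsub (hblock S hS B hB)
    · exact h
  have hmem : ∀ x : Fin 12, ∃ B ∈ P, x ∈ B := by
    intro x
    have hx : x ∈ P.biUnion id := hun ▸ Finset.mem_univ x
    simpa using hx
  obtain ⟨B0, hB0P, hB0⟩ := hmem 0
  obtain ⟨B1, hB1P, hB1⟩ := hmem 1
  obtain ⟨B2, hB2P, hB2⟩ := hmem 2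
  obtain ⟨B3, hB3P, hB3⟩ := hmem 3
  have hS1 : ({0,1,2,3} : Finset (Fin 12)) ∈ I12 := by decide
  have hS2 : ({3,4,5,6} : Finset (Fin 12)) ∈ I12 := by decide
  have hS3 : ({6,7,8,9} : Finset (Fin 12)) ∈ I12 := by decide
  have hS4 : ({9,10,11,0} : Finset (Fin 12)) ∈ I12 := by decide
  have hS5 : ({1,4,7,10} : Finset (Fin 12)) ∈ I12 := by decide
  set Bf : Fin 4 → Finset (Fin 12) := ![B0, B1, B2, B3] with hBf
  have hBfP : ∀ i : Fin 4, Bf i ∈ P := by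
    intro i; fin_cases i <;> simpa [hBf] using ‹_›
  have hB0' : (0 : Fin 12) ∈ Bf 0 := hB0
  have hB1' : (1 : Fin 12) ∈ Bf 1 := hB1
  have hB2' : (2 : Fin 12) ∈ Bf 2 := hB2
  have hB3' : (3 : Fin 12) ∈ Bf 3 := hB3
  -- blocks containing 0,1,2,3 are pairwise distinct
  have hd : ∀ i j : Fin 4, Bf i = Bf j → i = j := by
    intro i j hij
    by_contra hne'
    have hx : ∀ i : Fin 4, (![0,1,2,3] : Fin 4 → Fin 12) i ∈ Bf i := by
      intro i; fin_cases i <;> assumption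
    have hmemS : ∀ i : Fin 4, (![0,1,2,3] : Fin 4 → Fin 12) i ∈ ({0,1,2,3} : Finset (Fin 12)) := by
      decide
    have heq := hrain _ hS1 _ (hmemS i) _ (hmemS j) (Bf j) (hBfP j) (hij ▸ hx i) (hx j)
    have hinj : ∀ i j : Fin 4, (![0,1,2,3] : Fin 4 → Fin 12) i = ![0,1,2,3] j → i = j := by decide
    exact hne' (hinj i j heq)
  -- membership is unique
  have huniq : ∀ (x : Fin 12) (i j : Fin 4), x ∈ Bf i → x ∈ Bf j → i = j := by
    intro x i j hxi hxj
    apply hd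
    by_contra hne'
    exact (Finset.disjoint_left.mp (hdis _ (hBfP i) _ (hBfP j) hne')) hxi hxj
  -- P = {B0,B1,B2,B3}
  have hPeq : P = {B0, B1, B2, B3} := by
    have hd01 : B0 ≠ B1 := fun h => absurd (hd 0 1 h) (by decide)
    have hd02 : B0 ≠ B2 := fun h => absurd (hd 0 2 h) (by decide)
    have hd03 : B0 ≠ B3 := fun h => absurd (hd 0 3 h) (by decide)
    have hd12 : B1 ≠ B2 := fun h => absurd (hd 1 2 h) (by decide)
    have hd13 : B1 ≠ B3 := fun h => absurd (hd 1 3 h) (by decide)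
    have hd23 : B2 ≠ B3 := fun h => absurd (hd 2 3 h) (by decide)
    have hsub : ({B0, B1, B2, B3} : Finset (Finset (Fin 12))) ⊆ P := by
      intro B hB
      simp only [Finset.mem_insert, Finset.mem_singleton] at hB
      rcases hB with rfl|rfl|rfl|rfl <;> assumption
    have hc4 : ({B0, B1, B2, B3} : Finset (Finset (Fin 12))).card = 4 := by
      rw [Finset.card_insert_of_notMem (by simp [hd01, hd02, hd03]),
          Finset.card_insert_of_notMem (by simp [hd12, hd13]),
          Finset.card_insert_of_notMem (by simp [hd23]),
          Finset.card_singleton]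
    exact (Finset.eq_of_subset_of_card_le hsub (by rw [hc4, hcard])).symm
  -- each element has a color
  have hex : ∀ x : Fin 12, ∃ i : Fin 4, x ∈ Bf i := by
    intro x
    obtain ⟨C, hC, hxC⟩ := hmem x
    rw [hPeq] at hC
    simp only [Finset.mem_insert, Finset.mem_singleton] at hC
    rcases hC with rfl|rfl|rfl|rfl
    exacts [⟨0, hxC⟩, ⟨1, hxC⟩, ⟨2, hxC⟩, ⟨3, hxC⟩]
  obtain ⟨a4, h4⟩ := hex 4
  obtain ⟨a5, h5⟩ := hex 5
  obtain ⟨a6, h6⟩ := hex 6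
  obtain ⟨a7, h7⟩ := hex 7
  obtain ⟨a8, h8⟩ := hex 8
  obtain ⟨a9, h9⟩ := hex 9
  obtain ⟨a10, h10⟩ := hex 10
  obtain ⟨a11, h11⟩ := hex 11
  -- rainbow inequalities
  have hne' : ∀ S ∈ I12, ∀ x ∈ S, ∀ y ∈ S, x ≠ y → ∀ i j : Fin 4,
      x ∈ Bf i → y ∈ Bf j → i ≠ j := by
    intro S hS x hx y hy hxy i j hxi hyj hij
    exact hxy (hrain S hS x hx y hy (Bf j) (hBfP j) (hij ▸ hxi) hyj)
  have c1 := hne' _ hS2 4 (by decide) 5 (by decide) (by decide) a4 a5 h4 h5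
  have c2 := hne' _ hS2 4 (by decide) 6 (by decide) (by decide) a4 a6 h4 h6
  have c3 := hne' _ hS2 5 (by decide) 6 (by decide) (by decide) a5 a6 h5 h6
  have c4 := hne' _ hS2 4 (by decide) 3 (by decide) (by decide) a4 3 h4 hB3'
  have c5 := hne' _ hS2 5 (by decide) 3 (by decide) (by decide) a5 3 h5 hB3'
  have c6 := hne' _ hS2 6 (by decide) 3 (by decide) (by decide) a6 3 h6 hB3'
  have c7 := hne' _ hS3 6 (by decide) 7 (by decide) (by decide) a6 a7 h6 h7
  have c8 := hne' _ hS3 6 (by decide) 8 (by decide) (by decide) a6 a8 h6 h8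
  have c9 := hne' _ hS3 6 (by decide) 9 (by decide) (by decide) a6 a9 h6 h9
  have c10 := hne' _ hS3 7 (by decide) 8 (by decide) (by decide) a7 a8 h7 h8
  have c11 := hne' _ hS3 7 (by decide) 9 (by decide) (by decide) a7 a9 h7 h9
  have c12 := hne' _ hS3 8 (by decide) 9 (by decide) (by decide) a8 a9 h8 h9
  have c13 := hne' _ hS4 9 (by decide) 10 (by decide) (by decide) a9 a10 h9 h10
  have c14 := hne' _ hS4 9 (by decide) 11 (by decide) (by decide) a9 a11 h9 h11
  have c15 := hne' _ hS4 10 (by decide) 11 (by decide) (by decide) a10 a11 h10 h11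
  have c16 := hne' _ hS4 9 (by decide) 0 (by decide) (by decide) a9 0 h9 hB0'
  have c17 := hne' _ hS4 10 (by decide) 0 (by decide) (by decide) a10 0 h10 hB0'
  have c18 := hne' _ hS4 11 (by decide) 0 (by decide) (by decide) a11 0 h11 hB0'
  have c19 := hne' _ hS5 4 (by decide) 7 (by decide) (by decide) a4 a7 h4 h7
  have c20 := hne' _ hS5 4 (by decide) 10 (by decide) (by decide) a4 a10 h4 h10
  have c21 := hne' _ hS5 7 (by decide) 10 (by decide) (by decide) a7 a10 h7 h10
  have c22 := hne' _ hS5 4 (by decide) 1 (by decide) (by decide) a4 1 h4 hB1'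
  have c23 := hne' _ hS5 7 (by decide) 1 (by decide) (by decide) a7 1 h7 hB1'
  have c24 := hne' _ hS5 10 (by decide) 1 (by decide) (by decide) a10 1 h10 hB1'
  -- apply key
  rcases key a4 a5 a6 a7 a8 a9 a10 a11 c1 c2 c3 c4 c5 c6 c7 c8 c9 c10 c11 c12
      c13 c14 c15 c16 c17 c18 c19 c20 c21 c22 c23 c24 with
    ⟨e4,e5,e6,e7,e8,e9,e10,e11⟩ | ⟨e4,e5,e6,e7,e8,e9,e10,e11⟩ <;>
    subst e4 <;> subst e5 <;> subst e6 <;> subst e7 <;> subst e8 <;>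
    subst e9 <;> subst e10 <;> subst e11
  · left
    have hcol : ∀ x : Fin 12, x ∈ Bf (![0,1,2,3,0,1,2,3,0,1,2,3] x) := by
      intro x; fin_cases x <;> assumption
    have hblk : ∀ i : Fin 4, Bf i = Finset.univ.filter (fun x => ![0,1,2,3,0,1,2,3,0,1,2,3] x = i) := by
      intro i
      apply Finset.Subset.antisymm
      · intro x hx
        simp only [Finset.mem_filter, Finset.mem_univ, true_and]
        exact huniq x _ i (hcol x) hx
      · intro x hx
        simp only [Finset.mem_filter, Finset.mem_univ, true_and] at hx
        exact hx ▸ hcol x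
    have e0 : B0 = ({0,4,8} : Finset (Fin 12)) := by
      have := hblk 0; simp only [hBf] at this; simpa using this.trans (by decide)
    have e1 : B1 = ({1,5,9} : Finset (Fin 12)) := by
      have := hblk 1; simp only [hBf] at this; simpa using this.trans (by decide)
    have e2 : B2 = ({2,6,10} : Finset (Fin 12)) := by
      have := hblk 2; simp only [hBf] at this; simpa using this.trans (by decide)
    have e3 : B3 = ({3,7,11} : Finset (Fin 12)) := by
      have := hblk 3; simp only [hBf] at this; simpa using this.trans (by decide)
    rw [hPeq, e0, e1, e2, e3]; decide
  · right
    have hcol : ∀ x : Fin 12, x ∈ Bf (![0,1,2,3,2,0,1,0,3,2,3,1] x) := by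
      intro x; fin_cases x <;> assumption
    have hblk : ∀ i : Fin 4, Bf i = Finset.univ.filter (fun x => ![0,1,2,3,2,0,1,0,3,2,3,1] x = i) := by
      intro i
      apply Finset.Subset.antisymm
      · intro x hx
        simp only [Finset.mem_filter, Finset.mem_univ, true_and]
        exact huniq x _ i (hcol x) hx
      · intro x hx
        simp only [Finset.mem_filter, Finset.mem_univ, true_and] at hx
        exact hx ▸ hcol x
    have e0 : B0 = ({0,5,7} : Finset (Fin 12)) := by
      have := hblk 0; simp only [hBf] at this; simpa using this.trans (by decide)
    have e1 : B1 = ({1,6,11} : Finset (Fin 12)) := by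
      have := hblk 1; simp only [hBf] at this; simpa using this.trans (by decide)
    have e2 : B2 = ({2,4,9} : Finset (Fin 12)) := by
      have := hblk 2; simp only [hBf] at this; simpa using this.trans (by decide)
    have e3 : B3 = ({3,8,10} : Finset (Fin 12)) := by
      have := hblk 3; simp only [hBf] at this; simpa using this.trans (by decide)
    rw [hPeq, e0, e1, e2, e3]; decide
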